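/- arXiv:0907.1696 — 3 statements merged into one kernel-verified Lean document; each statement's English description precedes it below -/
import Mathlib

section
/- Let λ₁, λ₂, λ₃, λ₄ be real numbers with λ₁ > 0, λ₂ > 0, 4λ₁λ₂ > λ₃², and 4λ₁λ₂ > (λ₃ + λ₄)². Then for all complex vectors φ₁, φ₂ ∈ ℂ³ not both zero, the quartic form V₄ = λ₁(φ₁†φ₁)² + λ₂(φ₂†φ₂)² + λ₃(φ₁†φ₁)(φ₂†φ₂) + λ₄|φ₁†φ₂|² is strictly positive. -/
open scoped InnerProductSpace

lemma quad_pos (l1 l2 m a b : ℝ) (h1 : 0 < l1) (h2 : 0 < l2)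
    (hm : 4 * l1 * l2 > m ^ 2) (ha : 0 ≤ a) (hb : 0 ≤ b) (hab : 0 < a ∨ 0 < b) :
    0 < l1 * a ^ 2 + l2 * b ^ 2 + m * (a * b) := by
  rcases hab with hp | hp <;>
    nlinarith [sq_nonneg (2*l1*a + m*b), sq_nonneg (2*l2*b + m*a), sq_nonneg a, sq_nonneg b,
      mul_pos (mul_pos h1 hp) hp, mul_pos (mul_pos h2 hp) hp]

/-- Strong stability: under λ₁>0, λ₂>0, 4λ₁λ₂>λ₃², 4λ₁λ₂>(λ₃+λ₄)², the quartic
part of the economical 3-3-1 potential is strictly positive for (φ₁,φ₂) ≠ (0,0). -/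
theorem stmt_3 (l1 l2 l3 l4 : ℝ) (h1 : 0 < l1) (h2 : 0 < l2)
    (h3 : 4 * l1 * l2 > l3 ^ 2) (h4 : 4 * l1 * l2 > (l3 + l4) ^ 2)
    (φ1 φ2 : EuclideanSpace ℂ (Fin 3)) (hne : ¬(φ1 = 0 ∧ φ2 = 0)) :
    0 < l1 * ‖φ1‖ ^ 4 + l2 * ‖φ2‖ ^ 4 + l3 * (‖φ1‖ ^ 2 * ‖φ2‖ ^ 2)
      + l4 * ‖(⟪φ1, φ2⟫_ℂ : ℂ)‖ ^ 2 := by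
  have hcs : ‖(⟪φ1, φ2⟫_ℂ : ℂ)‖ ≤ ‖φ1‖ * ‖φ2‖ := norm_inner_le_norm φ1 φ2
  have hc0 : (0:ℝ) ≤ ‖(⟪φ1, φ2⟫_ℂ : ℂ)‖ := norm_nonneg _
  have ha : (0:ℝ) ≤ ‖φ1‖ := norm_nonneg _
  have hb : (0:ℝ) ≤ ‖φ2‖ := norm_nonneg _
  have hcs2 : ‖(⟪φ1, φ2⟫_ℂ : ℂ)‖ ^ 2 ≤ ‖φ1‖ ^ 2 * ‖φ2‖ ^ 2 := by
    nlinarith [mul_le_mul hcs hcs hc0 (mul_nonneg ha hb)]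
  have hpos : 0 < ‖φ1‖ ^ 2 ∨ 0 < ‖φ2‖ ^ 2 := by
    by_contra h
    push_neg at h
    exact hne ⟨norm_eq_zero.mp (pow_eq_zero_iff two_ne_zero |>.mp
        (le_antisymm h.1 (sq_nonneg _)) ▸ rfl),
      norm_eq_zero.mp (pow_eq_zero_iff two_ne_zero |>.mp
        (le_antisymm h.2 (sq_nonneg _)) ▸ rfl)⟩
  have ha2 : (0:ℝ) ≤ ‖φ1‖ ^ 2 := sq_nonneg _
  have hb2 : (0:ℝ) ≤ ‖φ2‖ ^ 2 := sq_nonneg _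
  rcases le_or_gt 0 l4 with hl4 | hl4
  · have := quad_pos l1 l2 l3 (‖φ1‖ ^ 2) (‖φ2‖ ^ 2) h1 h2 h3 ha2 hb2 hpos
    have h14 : l1 * (‖φ1‖ ^ 2) ^ 2 = l1 * ‖φ1‖ ^ 4 := by ring
    nlinarith [mul_nonneg hl4 (sq_nonneg ‖(⟪φ1, φ2⟫_ℂ : ℂ)‖)]
  · have := quad_pos l1 l2 (l3 + l4) (‖φ1‖ ^ 2) (‖φ2‖ ^ 2) h1 h2 h4 ha2 hb2 hpos
    nlinarith [mul_le_mul_of_nonpos_left hcs2 (le_of_lt hl4)]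
end

section
/- Let λ₁, λ₂, λ₃ ∈ ℝ with λ₁ > 0, λ₂ > 0, 4λ₁λ₂ > λ₃², and let v₁, V₁, v₂ ∈ ℝ not all zero with v₂ ≠ 0 and v₁² + V₁² ≠ 0. Then the symmetric 3×3 matrix M² = [[2λ₁V₁², λ₃v₂V₁, 2λ₁v₁V₁],[λ₃v₂V₁, 2λ₂v₂², λ₃v₁v₂],[2λ₁v₁V₁, λ₃v₁v₂, 2λ₁v₁²]] is positive semidefinite, has rank 2, and its two nonzero eigenvalues are M²± = (v₁²+V₁²)λ₁ + v₂²λ₂ ± √{[(v₁²+V₁²)λ₁ + v₂²λ₂]² + v₂²(v₁²+V₁²)(λ₃² - 4λ₁λ₂)}, both of which are strictly positive. -/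
open Matrix

set_option maxHeartbeats 1000000 in
/-- The neutral CP-even mass matrix is positive semidefinite of rank 2, and its two
nonzero eigenvalues M²± are strictly positive. -/
theorem stmt_10 (l1 l2 l3 v1 V1 v2 : ℝ) (h1 : 0 < l1) (h2 : 0 < l2)
    (h3 : 4 * l1 * l2 > l3 ^ 2) (hv2 : v2 ≠ 0) (hz : v1 ^ 2 + V1 ^ 2 ≠ 0) :
    let M : Matrix (Fin 3) (Fin 3) ℝ :=
      Matrix.of ![![2 * l1 * V1 ^ 2, l3 * v2 * V1, 2 * l1 * v1 * V1],
                  ![l3 * v2 * V1, 2 * l2 * v2 ^ 2, l3 * v1 * v2],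
                  ![2 * l1 * v1 * V1, l3 * v1 * v2, 2 * l1 * v1 ^ 2]]
    let Mplus : ℝ := (v1 ^ 2 + V1 ^ 2) * l1 + v2 ^ 2 * l2 +
      Real.sqrt (((v1 ^ 2 + V1 ^ 2) * l1 + v2 ^ 2 * l2) ^ 2
        + v2 ^ 2 * (v1 ^ 2 + V1 ^ 2) * (l3 ^ 2 - 4 * l1 * l2))
    let Mminus : ℝ := (v1 ^ 2 + V1 ^ 2) * l1 + v2 ^ 2 * l2 -
      Real.sqrt (((v1 ^ 2 + V1 ^ 2) * l1 + v2 ^ 2 * l2) ^ 2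
        + v2 ^ 2 * (v1 ^ 2 + V1 ^ 2) * (l3 ^ 2 - 4 * l1 * l2))
    M.PosSemidef ∧ M.rank = 2 ∧ 0 < Mminus ∧ 0 < Mplus ∧
      Module.End.HasEigenvalue (Matrix.toLin' M) Mplus ∧
      Module.End.HasEigenvalue (Matrix.toLin' M) Mminus := by
  intro M Mplus Mminus
  have hv2sq : 0 < v2 ^ 2 := by positivity
  have hS : 0 < v1 ^ 2 + V1 ^ 2 := lt_of_le_of_ne (by positivity) (Ne.symm hz)
  set S : ℝ := v1 ^ 2 + V1 ^ 2 with hSdef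
  set P : ℝ := S * l1 + v2 ^ 2 * l2 with hPdef
  set D : ℝ := P ^ 2 + v2 ^ 2 * S * (l3 ^ 2 - 4 * l1 * l2) with hDdef
  have hP : 0 < P := by positivity
  have hD0 : 0 ≤ D := by
    have h := sq_nonneg (S * l1 - v2 ^ 2 * l2)
    have h' : 0 ≤ v2 ^ 2 * S * l3 ^ 2 := by positivity
    nlinarith [h, h']
  have hsq : Real.sqrt D ^ 2 = D := Real.sq_sqrt hD0
  have hDP : Real.sqrt D < P := by
    rw [Real.sqrt_lt' hP]
    nlinarith [mul_pos (mul_pos hv2sq hS) (by nlinarith : (0:ℝ) < 4 * l1 * l2 - l3 ^ 2)]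
  have hsqnn : 0 ≤ Real.sqrt D := Real.sqrt_nonneg D
  have hMm : Mminus = P - Real.sqrt D := rfl
  have hMp : Mplus = P + Real.sqrt D := rfl
  -- positive semidefiniteness
  have hpsd : M.PosSemidef := by
    rw [Matrix.posSemidef_iff_dotProduct_mulVec]
    constructor
    · show Mᴴ = M
      ext i j
      fin_cases i <;> fin_cases j <;>
        simp [M, Matrix.conjTranspose_apply]
    · intro x
      have hx : dotProduct (star x) (M *ᵥ x) =
          2 * l1 * (V1 * x 0 + v1 * x 2) ^ 2 + 2 * l2 * (v2 * x 1) ^ 2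
            + 2 * l3 * (V1 * x 0 + v1 * x 2) * (v2 * x 1) := by
        simp [M, dotProduct, Matrix.mulVec, Fin.sum_univ_three]
        ring
      rw [hx]
      nlinarith [sq_nonneg (2 * l2 * (v2 * x 1) + l3 * (V1 * x 0 + v1 * x 2)),
        mul_nonneg (by nlinarith : (0:ℝ) ≤ 4 * l1 * l2 - l3 ^ 2)
          (sq_nonneg (V1 * x 0 + v1 * x 2)), h2.le]
  have hsq' : Real.sqrt D ^ 2 =
      ((v1 ^ 2 + V1 ^ 2) * l1 + v2 ^ 2 * l2) ^ 2
        + v2 ^ 2 * (v1 ^ 2 + V1 ^ 2) * (l3 ^ 2 - 4 * l1 * l2) := by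
    rw [hsq, hDdef, hPdef, hSdef]
  have key : ∀ μ : ℝ,
      μ ^ 2 - 2 * ((v1 ^ 2 + V1 ^ 2) * l1 + v2 ^ 2 * l2) * μ
        + (v1 ^ 2 + V1 ^ 2) * v2 ^ 2 * (4 * l1 * l2 - l3 ^ 2) = 0 →
      Module.End.HasEigenvalue (Matrix.toLin' M) μ := by
    intro μ hq
    rw [show Matrix.toLin' M = Matrix.toLinAlgEquiv' M from rfl,
      Module.End.hasEigenvalue_iff_mem_spectrum,
      AlgEquiv.spectrum_eq Matrix.toLinAlgEquiv' M, spectrum.mem_iff]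
    intro hunit
    rw [Algebra.algebraMap_eq_smul_one] at hunit
    have hdet := (Matrix.isUnit_iff_isUnit_det _).mp hunit
    rw [isUnit_iff_ne_zero] at hdet
    apply hdet
    rw [Matrix.det_fin_three]
    simp [M, Matrix.smul_apply, Matrix.sub_apply, Matrix.one_apply]
    linear_combination μ * hq
  refine ⟨hpsd, ?_, ?_, ?_, ?_, ?_⟩
  · -- rank = 2
    have hker : LinearMap.ker M.mulVecLin = Submodule.span ℝ {![v1, 0, -V1]} := by
      apply le_antisymm
      · intro x hx
        have hx0 : M *ᵥ x = 0 := hx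
        have e0 := congrFun hx0 0
        have e1 := congrFun hx0 1
        have e2 := congrFun hx0 2
        simp [M, Matrix.mulVec, dotProduct, Fin.sum_univ_three] at e0 e1 e2
        have e1' : l3 * (V1 * x 0 + v1 * x 2) + 2 * l2 * (v2 * x 1) = 0 := by
          have : v2 * (l3 * (V1 * x 0 + v1 * x 2) + 2 * l2 * (v2 * x 1)) = 0 := by
            linear_combination e1
          exact (mul_eq_zero.mp this).resolve_left hv2
        have e02 : 2 * l1 * (V1 * x 0 + v1 * x 2) + l3 * (v2 * x 1) = 0 := by
          have hSc : S * (2 * l1 * (V1 * x 0 + v1 * x 2) + l3 * (v2 * x 1)) = 0 := by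
            linear_combination V1 * e0 + v1 * e2
          exact (mul_eq_zero.mp hSc).resolve_left hz
        have ha : V1 * x 0 + v1 * x 2 = 0 := by
          have h4 : (4 * l1 * l2 - l3 ^ 2) * (V1 * x 0 + v1 * x 2) = 0 := by
            linear_combination 2 * l2 * e02 - l3 * e1'
          exact (mul_eq_zero.mp h4).resolve_left (sub_ne_zero_of_ne (ne_of_gt h3))
        have hb : v2 * x 1 = 0 := by
          have h4 : (4 * l1 * l2 - l3 ^ 2) * (v2 * x 1) = 0 := by
            linear_combination 2 * l1 * e1' - l3 * e02
          exact (mul_eq_zero.mp h4).resolve_left (sub_ne_zero_of_ne (ne_of_gt h3))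
        have hx1 : x 1 = 0 := (mul_eq_zero.mp hb).resolve_left hv2
        rw [Submodule.mem_span_singleton]
        refine ⟨(v1 * x 0 - V1 * x 2) / S, ?_⟩
        funext i
        fin_cases i <;>
          simp [hx1] <;> field_simp
        · linear_combination (-V1) * ha
        · linear_combination (-v1) * ha
      · rw [Submodule.span_le, Set.singleton_subset_iff]
        rw [SetLike.mem_coe, LinearMap.mem_ker]
        show M *ᵥ ![v1, 0, -V1] = 0
        funext i
        fin_cases i <;>
          simp [M, Matrix.mulVec, dotProduct, Fin.sum_univ_three] <;> ring
    have hk_ne : (![v1, 0, -V1] : Fin 3 → ℝ) ≠ 0 := by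
      intro h
      apply hz
      have h0 := congrFun h 0
      have h2' := congrFun h 2
      simp at h0 h2'
      rw [hSdef, h0, h2']
      ring
    have hdim : Module.finrank ℝ (LinearMap.ker M.mulVecLin) = 1 := by
      rw [hker]
      exact finrank_span_singleton hk_ne
    have hrk := LinearMap.finrank_range_add_finrank_ker M.mulVecLin
    rw [hdim] at hrk
    simp [Module.finrank_pi] at hrk
    show Module.finrank ℝ (LinearMap.range M.mulVecLin) = 2
    omega
  · rw [hMm]; linarith
  · rw [hMp]; positivity
  · apply key
    rw [hMp, hPdef, hSdef]
    linear_combination hsq'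
  · apply key
    rw [hMm, hPdef, hSdef]
    linear_combination hsq'
end

section
/- Let λ₁, λ₂, λ₃, λ₄, μ₁², μ₂² be real with λ₁ ≠ λ₂ and λ₁λ₂ > 0. If (√λ₁ - √λ₂)²·K₀ + (λ₁ - λ₂)·K₃ = -(μ₁² + μ₂²) and (λ₁ - λ₂)·K₀ + (√λ₁ + √λ₂)²·K₃ = -(μ₁² - μ₂²) has a solution (K₀, K₃) (where λ₁, λ₂ > 0), then √λ₁·μ₂² + √λ₂·μ₁² = 0. -/
/-- Solvability of the singular linear system for the exceptional solution w₅
forces √λ₁·μ₂² + √λ₂·μ₁² = 0. -/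
theorem stmt_14 (l1 l2 m1 m2 : ℝ) (hne : l1 ≠ l2) (h1 : 0 < l1) (h2 : 0 < l2)
    (hsol : ∃ K0 K3 : ℝ,
      (Real.sqrt l1 - Real.sqrt l2) ^ 2 * K0 + (l1 - l2) * K3 = -(m1 + m2) ∧
      (l1 - l2) * K0 + (Real.sqrt l1 + Real.sqrt l2) ^ 2 * K3 = -(m1 - m2)) :
    Real.sqrt l1 * m2 + Real.sqrt l2 * m1 = 0 := by
  obtain ⟨K0, K3, e1, e2⟩ := hsol
  have s1 : Real.sqrt l1 ^ 2 = l1 := Real.sq_sqrt h1.le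
  have s2 : Real.sqrt l2 ^ 2 = l2 := Real.sq_sqrt h2.le
  set a := Real.sqrt l1
  set b := Real.sqrt l2
  have e1' : (a - b) ^ 2 * K0 + (a ^ 2 - b ^ 2) * K3 = -(m1 + m2) := by
    rw [s1, s2]; exact e1
  have e2' : (a ^ 2 - b ^ 2) * K0 + (a + b) ^ 2 * K3 = -(m1 - m2) := by
    rw [s1, s2]; exact e2
  linear_combination ((a + b)/2) * e1' - ((a - b)/2) * e2'
end
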